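/- Let G be a finite group, f ∈ Aut(G), and H a subgroup of G with H ≤ Fix(f) = {g ∈ G : f(g) = g}. If G is generated by the set {g·f(g)⁻¹ : g ∈ G}, then the order of f in Aut(G) equals the order of the induced permutation f_H of the left coset space G/H given by f_H(gH) = f(g)H. -/
import Mathlib


/-!  Basic theory of quandles: structures, subquandles, congruences,
quotients, displacement groups, affine and principal quandles. -/

universe u v

/-- A quandle structure on a set `Q`: a binary operation whose left
translations are bijective, which is left self-distributive and idempotent. -/
structure QuandleStruct (Q : Type*) where
  act : Q → Q → Q
  act_bijective : ∀ a, Function.Bijective (act a)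
  self_distrib : ∀ a b c, act a (act b c) = act (act a b) (act a c)
  act_idem : ∀ a, act a a = a

namespace QuandleStruct

variable {Q : Type*} {R : Type*}

/-- The left translation `L_a` as a permutation of `Q`. -/
noncomputable def L (S : QuandleStruct Q) (a : Q) : Equiv.Perm Q :=
  Equiv.ofBijective (S.act a) (S.act_bijective a)

@[simp] lemma L_apply (S : QuandleStruct Q) (a b : Q) : S.L a b = S.act a b := rfl

/-- Left division `a \ b`. -/
noncomputable def ldiv (S : QuandleStruct Q) (a b : Q) : Q := (S.L a).symm b

@[simp] lemma ldiv_act (S : QuandleStruct Q) (a b : Q) : S.ldiv a (S.act a b) = b :=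
  (S.L a).symm_apply_apply b

@[simp] lemma act_ldiv (S : QuandleStruct Q) (a b : Q) : S.act a (S.ldiv a b) = b :=
  (S.L a).apply_symm_apply b

/-- The displacement group `Dis(Q)`, generated by all `L_a ∘ L_b⁻¹`. -/
def Dis (S : QuandleStruct Q) : Subgroup (Equiv.Perm Q) :=
  Subgroup.closure {g | ∃ a b, g = S.L a * (S.L b)⁻¹}

/-- A quandle is connected if its displacement group acts transitively. -/
def Connected (S : QuandleStruct Q) : Prop := ∀ x y : Q, ∃ g ∈ S.Dis, g x = y

/-- A quandle is faithful if `a ↦ L_a` is injective. -/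
def Faithful (S : QuandleStruct Q) : Prop := Function.Injective S.L

/-- A quandle is latin if all right translations are bijective. -/
def Latin (S : QuandleStruct Q) : Prop := ∀ a : Q, Function.Bijective (fun b => S.act b a)

/-- A subquandle: a nonempty subset closed under the operation and left division. -/
def IsSubquandle (S : QuandleStruct Q) (s : Set Q) : Prop :=
  s.Nonempty ∧ ∀ a ∈ s, ∀ b ∈ s, S.act a b ∈ s ∧ S.ldiv a b ∈ s

/-- The quandle structure induced on a subquandle. -/
def restrict (S : QuandleStruct Q) (s : Set Q) (hs : S.IsSubquandle s) :
    QuandleStruct s where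
  act a b := ⟨S.act a.1 b.1, (hs.2 a.1 a.2 b.1 b.2).1⟩
  act_bijective a := by
    constructor
    · intro x y h
      exact Subtype.ext ((S.act_bijective a.1).1 (congrArg Subtype.val h))
    · intro b
      refine ⟨⟨S.ldiv a.1 b.1, (hs.2 a.1 a.2 b.1 b.2).2⟩, Subtype.ext ?_⟩
      exact S.act_ldiv a.1 b.1
  self_distrib a b c := Subtype.ext (S.self_distrib a.1 b.1 c.1)
  act_idem a := Subtype.ext (S.act_idem a.1)

/-- A quandle (with more than one element) is strictly simple if it has no
proper subquandle. -/
def StrictlySimple (S : QuandleStruct Q) : Prop :=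
  Nontrivial Q ∧ ∀ s : Set Q, S.IsSubquandle s → s.Nontrivial → s = Set.univ

/-- A quandle is locally strictly simple (LSS) if every proper subquandle is
strictly simple. -/
def LSS (S : QuandleStruct Q) : Prop :=
  ∀ (s : Set Q) (hs : S.IsSubquandle s), s.Nontrivial → s ≠ Set.univ →
    StrictlySimple (S.restrict s hs)

/-- A congruence of a quandle: an equivalence relation compatible with the
operation and with left division. -/
structure IsCongruence (S : QuandleStruct Q) (r : Q → Q → Prop) : Prop where
  equiv : Equivalence r
  act_comp : ∀ {a b c d}, r a b → r c d → r (S.act a c) (S.act b d)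
  ldiv_comp : ∀ {a b c d}, r a b → r c d → r (S.ldiv a c) (S.ldiv b d)

/-- The setoid attached to a congruence. -/
def IsCongruence.setoid {S : QuandleStruct Q} {r : Q → Q → Prop}
    (hr : S.IsCongruence r) : Setoid Q := ⟨r, hr.equiv⟩

/-- The quotient quandle `Q/α`. -/
def quot (S : QuandleStruct Q) {r : Q → Q → Prop} (hr : S.IsCongruence r) :
    QuandleStruct (Quotient hr.setoid) where
  act := Quotient.map₂ S.act fun _ _ h1 _ _ h2 => hr.act_comp h1 h2
  act_bijective := by
    intro a
    induction a using Quotient.ind with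
    | _ a =>
    constructor
    · intro x y
      induction x using Quotient.ind with
      | _ x =>
      induction y using Quotient.ind with
      | _ y =>
      intro h
      have h1 : r (S.act a x) (S.act a y) := Quotient.exact h
      have h2 := hr.ldiv_comp (hr.equiv.refl a) h1
      rw [S.ldiv_act, S.ldiv_act] at h2
      exact Quotient.sound h2
    · intro b
      induction b using Quotient.ind with
      | _ b =>
      exact ⟨Quotient.mk _ (S.ldiv a b), congrArg (Quotient.mk _) (S.act_ldiv a b)⟩
  self_distrib := by
    intro a b c
    induction a using Quotient.ind with
    | _ a =>
    induction b using Quotient.ind with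
    | _ b =>
    induction c using Quotient.ind with
    | _ c =>
    exact congrArg (Quotient.mk _) (S.self_distrib a b c)
  act_idem := by
    intro a
    induction a using Quotient.ind with
    | _ a =>
    exact congrArg (Quotient.mk _) (S.act_idem a)

/-- The congruence block `[a]_α` is a subquandle. -/
lemma block_isSubquandle (S : QuandleStruct Q) {r : Q → Q → Prop}
    (hr : S.IsCongruence r) (a : Q) : S.IsSubquandle {b | r a b} := by
  refine ⟨⟨a, hr.equiv.refl a⟩, fun x hx y hy => ⟨?_, ?_⟩⟩
  · have h := hr.act_comp hx hy
    rwa [S.act_idem] at h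
  · have h := hr.ldiv_comp hx hy
    have ha : S.ldiv a a = a := by
      have h2 := S.ldiv_act a a
      rwa [S.act_idem] at h2
    rwa [ha] at h

/-- A quandle is simple if its only congruences are `0_Q` (equality) and
`1_Q` (the full relation). -/
def Simple (S : QuandleStruct Q) : Prop :=
  ∀ r : Q → Q → Prop, S.IsCongruence r →
    r = (fun a b : Q => a = b) ∨ r = (fun _ _ : Q => True)

/-- A quandle is subdirectly irreducible if the intersection of all congruences
different from `0_Q` is different from `0_Q`. -/
def SubdirectlyIrreducible (S : QuandleStruct Q) : Prop :=
  ∃ a b : Q, a ≠ b ∧ ∀ r : Q → Q → Prop, S.IsCongruence r →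
    r ≠ (fun a b : Q => a = b) → r a b

/-- Isomorphism of quandles. -/
def QIso (S : QuandleStruct Q) (T : QuandleStruct R) : Prop :=
  ∃ e : Q ≃ R, ∀ a b, e (S.act a b) = T.act (e a) (e b)

/-- The relation `σ_Q` : two elements are related iff their point stabilizers
in the displacement group coincide. -/
def sigmaRel (S : QuandleStruct Q) (a b : Q) : Prop :=
  ∀ g ∈ S.Dis, (g a = a ↔ g b = b)

/-- The displacement group relative to a relation `r`. -/
def DisRel (S : QuandleStruct Q) (r : Q → Q → Prop) : Subgroup (Equiv.Perm Q) :=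
  Subgroup.closure {g | ∃ a b, r a b ∧ g = S.L a * (S.L b)⁻¹}

/-- The direct product of two quandles. -/
def prod (S : QuandleStruct Q) (T : QuandleStruct R) : QuandleStruct (Q × R) where
  act a b := (S.act a.1 b.1, T.act a.2 b.2)
  act_bijective a := by
    show Function.Bijective (Prod.map (S.act a.1) (T.act a.2))
    exact (S.act_bijective a.1).prodMap (T.act_bijective a.2)
  self_distrib a b c := Prod.ext (S.self_distrib a.1 b.1 c.1) (T.self_distrib a.2 b.2 c.2)
  act_idem a := Prod.ext (S.act_idem a.1) (T.act_idem a.2)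

end QuandleStruct

/-- The affine quandle `Aff(A, f)` over an abelian group `A` with
`a * b = (1 - f)(a) + f(b)`. -/
def affineQuandle (A : Type*) [AddCommGroup A] (f : A ≃+ A) : QuandleStruct A where
  act a b := a - f a + f b
  act_bijective a := by
    show Function.Bijective ((fun x : A => a - f a + x) ∘ f)
    exact (Equiv.addLeft (a - f a)).bijective.comp f.bijective
  self_distrib a b c := by
    simp only [map_add, map_sub]
    abel
  act_idem a := by simp

/-- Data for an affine quandle: a finite abelian group together with an
automorphism. -/
structure AffineData : Type 1 where
  carrier : Type
  [grp : AddCommGroup carrier]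
  [fin : Finite carrier]
  equivAdd : carrier ≃+ carrier

attribute [instance] AffineData.grp AffineData.fin

namespace QuandleStruct

/-- A quandle is affine if it is isomorphic to `Aff(A, f)` for some finite
abelian group `A` and automorphism `f`. -/
def IsAffine {Q : Type*} (S : QuandleStruct Q) : Prop :=
  ∃ D : AffineData, S.QIso (affineQuandle D.carrier D.equivAdd)

end QuandleStruct

/-- The principal quandle `Q(G, f)` with `a * b = a f(a⁻¹ b)`. -/
def principalQuandle (G : Type*) [Group G] (f : G ≃* G) : QuandleStruct G where
  act a b := a * f (a⁻¹ * b)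
  act_bijective a := by
    show Function.Bijective ((fun x : G => a * x) ∘ (⇑f) ∘ (fun b : G => a⁻¹ * b))
    exact ((Equiv.mulLeft a).bijective.comp f.bijective).comp (Equiv.mulLeft a⁻¹).bijective
  self_distrib a b c := by
    simp only [map_mul, map_inv, mul_inv_rev, inv_inv]
    group
  act_idem a := by simp

/-- An extraspecial `q`-group: a finite `q`-group whose center, derived
subgroup and Frattini subgroup coincide and have order `q`. -/
def IsExtraspecial (q : ℕ) (G : Type*) [Group G] : Prop :=
  Finite G ∧ IsPGroup q G ∧ Subgroup.center G = commutator G ∧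
    commutator G = frattini G ∧ Nat.card (Subgroup.center G) = q

/-- A bundled group. -/
structure GroupData : Type 1 where
  carrier : Type
  [grp : Group carrier]

attribute [instance] GroupData.grp


/-- Let `G` be a finite group, `f` an automorphism, and
`H ≤ Fix(f)` a subgroup. If `G` is generated by `{g·f(g)⁻¹}`, then the order
of `f` equals the order of the induced permutation of `G/H`. -/
theorem statement6 {G : Type u} [Group G] [Finite G] (f : MulAut G)
    (H : Subgroup G) (hH : ∀ h ∈ H, f h = h)
    (hgen : Subgroup.closure {x : G | ∃ g : G, x = g * (f g)⁻¹} = ⊤)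
    (σ : Equiv.Perm (G ⧸ H))
    (hσ : ∀ g : G, σ (QuotientGroup.mk g) = QuotientGroup.mk (f g)) :
    orderOf f = orderOf σ := by
  have hpow : ∀ (n : ℕ) (g : G), σ ^ n • (QuotientGroup.mk g : G ⧸ H)
      = QuotientGroup.mk ((f ^ n) g) := by
    intro n
    induction n with
    | zero => intro g; simp
    | succ n ih =>
      intro g
      have : σ ^ (n + 1) = σ ^ n * σ := pow_succ σ n
      rw [this, mul_smul]
      have h1 : σ • (QuotientGroup.mk g : G ⧸ H) = QuotientGroup.mk (f g) := hσ g
      rw [h1, ih (f g)]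
      rfl
  rw [orderOf_eq_orderOf_iff]
  intro n
  constructor
  · intro hf
    ext x
    induction x using QuotientGroup.induction_on with
    | H g =>
      have := hpow n g
      simp only [hf, MulAut.one_apply] at this
      simpa using this
  · intro hs
    have hfix : ∀ g : G, g⁻¹ * (f ^ n) g ∈ H := by
      intro g
      have := hpow n g
      rw [hs] at this
      simp only [Equiv.Perm.smul_def, Equiv.Perm.one_apply] at this
      exact (QuotientGroup.eq).mp this
    -- f^n fixes each generator g * (f g)⁻¹
    have hsub : Subgroup.closure {x : G | ∃ g : G, x = g * (f g)⁻¹}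
        ≤ MonoidHom.eqLocus (f ^ n : MulAut G).toMonoidHom (MonoidHom.id G) := by
      apply Subgroup.closure_le _ |>.mpr
      rintro x ⟨g, rfl⟩
      show (f ^ n) (g * (f g)⁻¹) = g * (f g)⁻¹
      set k := g⁻¹ * (f ^ n) g with hk
      have hkH : k ∈ H := hfix g
      have hfk : f k = k := hH k hkH
      have hfng : (f ^ n) g = g * k := by rw [hk]; group
      have hcomm : (f ^ n) (f g) = f ((f ^ n) g) := by
        have : f ^ n * f = f * f ^ n := (Commute.self_pow f n).symm
        calc (f ^ n) (f g) = (f ^ n * f) g := rfl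
          _ = (f * f ^ n) g := by rw [this]
          _ = f ((f ^ n) g) := rfl
      rw [map_mul, map_inv, hcomm, hfng, map_mul, hfk, mul_inv_rev]
      group
    have : ∀ g : G, (f ^ n) g = g := by
      intro g
      have hg : g ∈ Subgroup.closure {x : G | ∃ g : G, x = g * (f g)⁻¹} := by
        rw [hgen]; trivial
      exact hsub hg
    ext g
    exact this g
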